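/- Let n ≥ 1, λ = [i₁;l₁) ⊕ [i₂;l₂) with l₁ ≥ l₂ ≥ 0, and suppose μ = [i₁;m₁) ⊕ [i₂;m₂) has the same dimension vector as λ (i.e., for each j ∈ ℤ/nℤ, the number of boxes labelled j is equal). Then either (a) m₁ ≡ l₁ and m₂ ≡ l₂ (mod n), or (b) m₁ ≡ i₂ - i₁ + l₂ and m₂ ≡ i₁ - i₂ + l₁ (mod n). -/
import Mathlib


/-- The dimension vector of the segment `[i;l)`: `d_j = #{0 ≤ k < l : i + k = j}`
in `ℤ/nℤ`. -/
def dseg (n : ℕ) (i : ZMod n) (l : ℕ) (j : ZMod n) : ℕ :=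
  ((Finset.range l).filter (fun (k : ℕ) => i + (k : ZMod n) = j)).card

lemma dseg_zero (n : ℕ) (i j : ZMod n) : dseg n i 0 j = 0 := by simp [dseg]

lemma dseg_succ (n : ℕ) (i : ZMod n) (l : ℕ) (j : ZMod n) :
    dseg n i (l + 1) j = dseg n i l j + if i + (l : ZMod n) = j then 1 else 0 := by
  unfold dseg
  rw [Finset.range_add_one, Finset.filter_insert]
  split_ifs with h
  · rw [Finset.card_insert_of_notMem (by simp)]
  · rfl

lemma dseg_add (n : ℕ) (i : ZMod n) (a t : ℕ) (j : ZMod n) :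
    dseg n i (a + t) j = dseg n i a j + dseg n (i + (a : ZMod n)) t j := by
  induction t with
  | zero => simp [dseg_zero]
  | succ t ih =>
    rw [← Nat.add_assoc, dseg_succ, ih, dseg_succ]
    have h : i + ((a + t : ℕ) : ZMod n) = i + (a : ZMod n) + (t : ZMod n) := by
      push_cast; ring
    rw [h, Nat.add_assoc]

lemma dseg_small (n : ℕ) [NeZero n] (s : ZMod n) (t : ℕ) (ht : t ≤ n) (j : ZMod n) :
    dseg n s t j = if (j - s).val < t then 1 else 0 := by
  have key : ∀ k ∈ Finset.range t, (s + (k : ZMod n) = j ↔ k = (j - s).val) := by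
    intro k hk
    rw [Finset.mem_range] at hk
    constructor
    · intro h
      have h2 : (k : ZMod n) = j - s := by rw [← h]; ring
      have h3 := congrArg ZMod.val h2
      rwa [ZMod.val_natCast, Nat.mod_eq_of_lt (lt_of_lt_of_le hk ht)] at h3
    · rintro rfl
      rw [ZMod.natCast_zmod_val]
      ring
  unfold dseg
  rw [Finset.filter_congr key, Finset.filter_eq']
  split_ifs with h1 h2 h2 <;> simp_all [Finset.mem_range]

lemma dseg_mul (n : ℕ) [NeZero n] (s : ZMod n) (q : ℕ) (j : ZMod n) :
    dseg n s (n * q) j = q := by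
  induction q with
  | zero => simp [dseg_zero]
  | succ q ih =>
    have h : n * (q + 1) = n * q + n := by ring
    rw [h, dseg_add, ih, dseg_small n _ n le_rfl, if_pos (ZMod.val_lt _)]

lemma dseg_mod (n : ℕ) [NeZero n] (s : ZMod n) (t : ℕ) (j : ZMod n) :
    dseg n s t j = t / n + dseg n s (t % n) j := by
  have h0 : ((n * (t / n) : ℕ) : ZMod n) = 0 := by
    rw [ZMod.natCast_eq_zero_iff]; exact Dvd.intro _ rfl
  conv_lhs => rw [← Nat.div_add_mod t n]
  rw [dseg_add, dseg_mul, h0, add_zero]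

lemma orbit1 (n T : ℕ) [NeZero n] (δ : ZMod n)
    (H : ∀ r : ZMod n, r.val < T ↔ (r + δ).val < T) (hT0 : 0 < T) :
    ∀ k : ℕ, (k * δ.val) % n < T := by
  intro k
  induction k with
  | zero => simpa using hT0
  | succ k ih =>
    have h1 : (((k * δ.val : ℕ) : ZMod n)).val < T := by
      rwa [ZMod.val_natCast]
    have h2 := (H _).mp h1
    have h3 : ((k * δ.val : ℕ) : ZMod n) + δ = (((k + 1) * δ.val : ℕ) : ZMod n) := by
      have e : (((k + 1) * δ.val : ℕ) : ZMod n)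
          = ((k * δ.val : ℕ) : ZMod n) + ((δ.val : ℕ) : ZMod n) := by
        rw [← Nat.cast_add]; congr 1; ring
      rw [e, ZMod.natCast_zmod_val]
    rwa [h3, ZMod.val_natCast] at h2

lemma orbit2 (n T : ℕ) [NeZero n] (hTn : T < n) (δ : ZMod n)
    (H : ∀ r : ZMod n, r.val < T ↔ (r + δ).val < T) :
    ∀ k : ℕ, T ≤ (T + k * δ.val) % n := by
  intro k
  induction k with
  | zero => simp [Nat.mod_eq_of_lt hTn]
  | succ k ih =>
    have h1 : ¬ (((T + k * δ.val : ℕ) : ZMod n)).val < T := by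
      rw [ZMod.val_natCast]; omega
    have h2 : ¬ (((T + k * δ.val : ℕ) : ZMod n) + δ).val < T := fun h => h1 ((H _).mpr h)
    have h3 : ((T + k * δ.val : ℕ) : ZMod n) + δ = ((T + (k + 1) * δ.val : ℕ) : ZMod n) := by
      have e : ((T + (k + 1) * δ.val : ℕ) : ZMod n)
          = ((T + k * δ.val : ℕ) : ZMod n) + ((δ.val : ℕ) : ZMod n) := by
        rw [← Nat.cast_add]; congr 1; ring
      rw [e, ZMod.natCast_zmod_val]
    rw [h3, ZMod.val_natCast] at h2
    omega

lemma helper (n T : ℕ) [NeZero n] (hT0 : 0 < T) (hTn : T < n) (δ : ZMod n) (hδ : δ ≠ 0)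
    (H : ∀ r : ZMod n, r.val < T ↔ (r + δ).val < T) :
    n - δ.val < T ∧ T < δ.val := by
  have he0 : 0 < δ.val := ZMod.val_pos.mpr hδ
  have hen : δ.val < n := ZMod.val_lt δ
  have h1n : 1 ≤ n := by omega
  constructor
  · have ho := orbit1 n T δ H hT0 (n - 1)
    have heq1 : (n - 1) * δ.val = (δ.val - 1) * n + (n - δ.val) := by
      zify [h1n, he0, hen.le]; ring
    have heq : ((n - 1) * δ.val) % n = n - δ.val := by
      rw [heq1, Nat.add_comm, Nat.add_mul_mod_self_right, Nat.mod_eq_of_lt (by omega)]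
    omega
  · by_contra h
    push_neg at h
    have ho := orbit2 n T hTn δ H (n - 1)
    have heq1 : T + (n - 1) * δ.val = δ.val * n + (T - δ.val) := by
      zify [h1n, h, hen.le]; ring
    have heq : (T + (n - 1) * δ.val) % n = T - δ.val := by
      rw [heq1, Nat.add_comm, Nat.add_mul_mod_self_right, Nat.mod_eq_of_lt (by omega)]
    omega

lemma ite_eq_iff'' {p q : Prop} [Decidable p] [Decidable q]
    (h : (if p then (1 : ℕ) else 0) = if q then 1 else 0) : p ↔ q := by
  split_ifs at h <;> simp_all

lemma dseg_run_eq (n : ℕ) (s s' : ZMod n) (t : ℕ)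
    (h : ∀ j, dseg n s t j = dseg n s' t j) : (t : ZMod n) = 0 ∨ s = s' := by
  rcases Nat.eq_zero_or_pos n with hn | hn
  · subst hn
    rcases Nat.eq_zero_or_pos t with ht | ht
    · left; simp [ht]
    · right
      have key : ∀ a b : ZMod 0, (∀ j, dseg 0 a t j = dseg 0 b t j) →
          ∃ k : ℕ, b + (k : ZMod 0) = a := by
        intro a b hab
        have h1 : 0 < dseg 0 b t a := by
          rw [← hab a]
          apply Finset.card_pos.mpr
          exact ⟨0, Finset.mem_filter.mpr ⟨Finset.mem_range.mpr ht, by simp⟩⟩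
        obtain ⟨k, hk⟩ := Finset.card_pos.mp h1
        rw [Finset.mem_filter] at hk
        exact ⟨k, hk.2⟩
      obtain ⟨k, hk⟩ := key s s' h
      obtain ⟨k', hk'⟩ := key s' s (fun j => (h j).symm)
      have hz : s + ((k' + k : ℕ) : ZMod 0) = s + 0 := by
        push_cast
        rw [add_zero, ← add_assoc, hk', hk]
      have hz2 : ((k' + k : ℕ) : ZMod 0) = 0 := add_left_cancel hz
      have hk0 : k' + k = 0 := by exact_mod_cast hz2
      have : k' = 0 := by omega
      rw [this] at hk'
      rw [← hk']
      simp
  · haveI : NeZero n := ⟨hn.ne'⟩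
    by_cases hT : t % n = 0
    · left
      rw [ZMod.natCast_eq_zero_iff]
      exact Nat.dvd_of_mod_eq_zero hT
    · right
      by_contra hss
      set T := t % n with hTdef
      have hT0 : 0 < T := Nat.pos_of_ne_zero hT
      have hTn : T < n := Nat.mod_lt t hn
      have H0 : ∀ j, dseg n s T j = dseg n s' T j := by
        intro j
        have h2 := h j
        rw [dseg_mod n s t j, dseg_mod n s' t j, ← hTdef] at h2
        omega
      have H : ∀ r : ZMod n, r.val < T ↔ (r + (s - s')).val < T := by
        intro r
        have h2 := H0 (s + r)
        rw [dseg_small n s T hTn.le, dseg_small n s' T hTn.le] at h2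
        have e1 : s + r - s = r := by ring
        have e2 : s + r - s' = r + (s - s') := by ring
        rw [e1, e2] at h2
        exact ite_eq_iff'' h2
      have hδ : s - s' ≠ 0 := sub_ne_zero.mpr hss
      have c1 := helper n T hT0 hTn (s - s') hδ H
      have Hneg : ∀ r : ZMod n, r.val < T ↔ (r + (-(s - s'))).val < T := by
        intro r
        have h2 := H (r + (-(s - s')))
        simp only [add_assoc, neg_add_cancel, add_zero] at h2
        exact h2.symm
      have hδ2 : (-(s - s')) ≠ 0 := neg_ne_zero.mpr hδ
      have c2 := helper n T hT0 hTn (-(s - s')) hδ2 Hneg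
      have hv : (-(s - s')).val = n - (s - s').val := by
        rw [ZMod.neg_val, if_neg hδ]
      have hlt := ZMod.val_lt (s - s')
      have hpos := ZMod.val_pos.mpr hδ
      omega

/-- if `λ = [i₁;l₁) ⊕ [i₂;l₂)` with `l₁ ≥ l₂ ≥ 0` and
`μ = [i₁;m₁) ⊕ [i₂;m₂)` with `m₁ + m₂ = l₁ + l₂` has the same dimension vector
as `λ`, then either (a) `m₁ ≡ l₁` and `m₂ ≡ l₂ (mod n)`, or
(b) `m₁ ≡ i₂ - i₁ + l₂` and `m₂ ≡ i₁ - i₂ + l₁ (mod n)`. -/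
theorem stmt_5 (n : ℕ) (i₁ i₂ : ZMod n) (l₁ l₂ m₁ m₂ : ℕ)
    (hl : l₂ ≤ l₁) (hsum : m₁ + m₂ = l₁ + l₂)
    (hdim : ∀ j : ZMod n, dseg n i₁ m₁ j + dseg n i₂ m₂ j
      = dseg n i₁ l₁ j + dseg n i₂ l₂ j) :
    ((m₁ : ZMod n) = (l₁ : ZMod n) ∧ (m₂ : ZMod n) = (l₂ : ZMod n)) ∨
    ((m₁ : ZMod n) = i₂ - i₁ + (l₂ : ZMod n) ∧
     (m₂ : ZMod n) = i₁ - i₂ + (l₁ : ZMod n)) := by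
  rcases le_or_gt m₁ l₁ with hm | hm
  · obtain ⟨t, ht⟩ : ∃ t, l₁ = m₁ + t := ⟨l₁ - m₁, by omega⟩
    have hm2 : m₂ = l₂ + t := by omega
    have key : ∀ j, dseg n (i₂ + (l₂ : ZMod n)) t j = dseg n (i₁ + (m₁ : ZMod n)) t j := by
      intro j
      have h2 := hdim j
      rw [ht, hm2, dseg_add, dseg_add] at h2
      omega
    rcases dseg_run_eq n _ _ t key with h0 | h0
    · left
      constructor
      · rw [ht]; push_cast; rw [h0, add_zero]
      · rw [hm2]; push_cast; rw [h0, add_zero]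
    · right
      have h1 : (m₁ : ZMod n) = i₂ - i₁ + (l₂ : ZMod n) := by linear_combination -h0
      refine ⟨h1, ?_⟩
      have hcast : (l₁ : ZMod n) = (m₁ : ZMod n) + (t : ZMod n) := by
        rw [ht]; push_cast; ring
      have hcast2 : (m₂ : ZMod n) = (l₂ : ZMod n) + (t : ZMod n) := by
        rw [hm2]; push_cast; ring
      rw [hcast2]
      linear_combination -hcast - h1
  · obtain ⟨t, ht⟩ : ∃ t, m₁ = l₁ + t := ⟨m₁ - l₁, by omega⟩
    have hm2 : l₂ = m₂ + t := by omega
    have key : ∀ j, dseg n (i₁ + (l₁ : ZMod n)) t j = dseg n (i₂ + (m₂ : ZMod n)) t j := by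
      intro j
      have h2 := hdim j
      rw [ht, hm2, dseg_add, dseg_add] at h2
      omega
    rcases dseg_run_eq n _ _ t key with h0 | h0
    · left
      constructor
      · rw [ht]; push_cast; rw [h0, add_zero]
      · have hcast2 : (l₂ : ZMod n) = (m₂ : ZMod n) + (t : ZMod n) := by
          rw [hm2]; push_cast; ring
        rw [hcast2, h0, add_zero]
    · right
      have h2 : (m₂ : ZMod n) = i₁ - i₂ + (l₁ : ZMod n) := by linear_combination -h0
      refine ⟨?_, h2⟩
      have hcast : (m₁ : ZMod n) = (l₁ : ZMod n) + (t : ZMod n) := by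
        rw [ht]; push_cast; ring
      have hcast2 : (l₂ : ZMod n) = (m₂ : ZMod n) + (t : ZMod n) := by
        rw [hm2]; push_cast; ring
      rw [hcast]
      linear_combination -hcast2 - h2
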